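/- Euler's pentagonal number theorem: Π_{n≥1} (1 - q^n) = Σ_{m∈ℤ} (-1)^m q^{m(3m-1)/2} as formal power series. -/

import Mathlib

open PowerSeries

/-- The infinite product `∏_{n ≥ 1} f n` of power series, where the `n`-th factor
is `1 + O(q^n)`: its `N`-th coefficient is the `N`-th coefficient of any
sufficiently long partial product. -/
noncomputable def seriesProd (f : ℕ → PowerSeries ℤ) : PowerSeries ℤ :=
  PowerSeries.mk fun N => coeff (R := ℤ) N (∏ n ∈ Finset.range (N + 1), f n)

/-- A formal sum `∑_{n ∈ ℤ} c n * q^(e n)`, where for each `N` only finitely many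
`n ∈ ℤ` satisfy `e n = N`: its `N`-th coefficient is `∑_{n : e n = N} c n`. -/
noncomputable def seriesSum (c : ℤ → ℤ) (e : ℤ → ℕ) : PowerSeries ℤ :=
  PowerSeries.mk fun N => ∑' n : ℤ, if e n = N then c n else 0

section
open Finset

namespace PentagonalAux

/-! ### Integer pentagonal number facts -/

lemma pent_nonneg (m : ℤ) : 0 ≤ m * (3 * m - 1) := by
  rcases le_or_gt m 0 with h | h
  · have h2 : (0:ℤ) ≤ (-m) * (1 - 3 * m) := mul_nonneg (by linarith) (by linarith)
    nlinarith [h2]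
  · exact mul_nonneg (by linarith) (by linarith)

lemma pent_even (m : ℤ) : 2 ∣ m * (3 * m - 1) := by
  obtain ⟨c, hc⟩ := Int.even_mul_succ_self (m - 1)
  exact ⟨c + m ^ 2, by linear_combination hc⟩

lemma pent_toNat_iff (m : ℤ) (N : ℕ) :
    (m * (3 * m - 1) / 2).toNat = N ↔ m * (3 * m - 1) = 2 * N := by
  obtain ⟨c, hc⟩ := pent_even m
  have h0 := pent_nonneg m
  generalize hA : m * (3 * m - 1) = A at *
  omega

lemma pent_inj {m n : ℤ} (h : m * (3 * m - 1) = n * (3 * n - 1)) : m = n := by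
  have h2 : (m - n) * (3 * (m + n) - 1) = 0 := by linear_combination h
  rcases mul_eq_zero.1 h2 with h3 | h3 <;> omega

lemma negOnePow_natAbs (m : ℤ) : (m.negOnePow : ℤ) = (-1) ^ m.natAbs := by
  rcases Int.even_or_odd m with h | h
  · rw [Int.negOnePow_even m h, Even.neg_one_pow (Int.natAbs_even.2 h)]
    rfl
  · rw [Int.negOnePow_odd m h, Odd.neg_one_pow (Int.natAbs_odd.2 h)]
    rfl

/-! ### Gauss sums on `Icc` -/

lemma sum_Icc_mul_two (a b : ℕ) : (∑ i ∈ Icc a b, i) * 2 = (a + b) * (b + 1 - a) := by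
  rcases lt_or_ge b a with h | h
  · rw [Finset.Icc_eq_empty (by omega)]
    simp
    omega
  · have hIcc : Icc a b = range (b + 1) \ range a := by
      ext x
      simp only [mem_Icc, mem_sdiff, mem_range]
      omega
    have hsub : range a ⊆ range (b + 1) := by
      intro x hx
      simp only [mem_range] at *
      omega
    have h1 : (∑ i ∈ range (b + 1) \ range a, i) + ∑ i ∈ range a, i
        = ∑ i ∈ range (b + 1), i := Finset.sum_sdiff hsub
    have h2 := Finset.sum_range_id_mul_two (b + 1)
    have h3 := Finset.sum_range_id_mul_two a
    rcases Nat.eq_zero_or_pos a with ha | ha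
    · subst ha
      rw [hIcc]
      simp only [Finset.range_zero, Finset.sdiff_empty]
      zify at h2 ⊢
      push_cast [Nat.add_sub_cancel] at h2 ⊢
      nlinarith [h2]
    · rw [hIcc]
      zify [ha, Nat.le_succ_of_le h] at h1 h2 h3 ⊢
      push_cast [Nat.add_sub_cancel] at h2 ⊢
      nlinarith [h1, h2, h3]




/-- partitions of `N` into distinct (positive) parts -/
def Om (N : ℕ) : Finset (Finset ℕ) :=
  (Finset.range (N + 1)).powerset.filter (fun S => 0 ∉ S ∧ S.sum id = N)

lemma mem_Om {N : ℕ} {S : Finset ℕ} : S ∈ Om N ↔ 0 ∉ S ∧ S.sum id = N := by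
  constructor
  · intro h
    exact (Finset.mem_filter.1 h).2
  · rintro ⟨h0, hs⟩
    refine Finset.mem_filter.2 ⟨Finset.mem_powerset.2 fun x hx => ?_, h0, hs⟩
    have hx2 : id x ≤ S.sum id :=
      Finset.single_le_sum (f := id) (fun i _ => Nat.zero_le i) hx
    have hx3 : x ≤ N := by rw [← hs]; exact hx2
    simp only [Finset.mem_range]
    omega

noncomputable def mx (S : Finset ℕ) : ℕ := sSup ↑S
noncomputable def mn (S : Finset ℕ) : ℕ := sInf ↑S
noncomputable def sl (S : Finset ℕ) : ℕ := sInf {j | mx S - j ∉ S}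

lemma mx_mem {S : Finset ℕ} (h : S.Nonempty) : mx S ∈ S := by
  have h2 : (↑S : Set ℕ).Nonempty := by simpa using h
  simpa [mx] using Nat.sSup_mem h2 S.finite_toSet.bddAbove

lemma le_mx {S : Finset ℕ} {x : ℕ} (hx : x ∈ S) : x ≤ mx S :=
  le_csSup S.finite_toSet.bddAbove (by simpa using hx)

lemma mx_eq {S : Finset ℕ} {a : ℕ} (ha : a ∈ S) (h : ∀ x ∈ S, x ≤ a) : mx S = a :=
  le_antisymm (csSup_le ⟨a, by simpa using ha⟩ (by simpa using h)) (le_mx ha)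

lemma mn_mem {S : Finset ℕ} (h : S.Nonempty) : mn S ∈ S := by
  have h2 : (↑S : Set ℕ).Nonempty := by simpa using h
  simpa [mn] using Nat.sInf_mem h2

lemma mn_le {S : Finset ℕ} {x : ℕ} (hx : x ∈ S) : mn S ≤ x :=
  Nat.sInf_le (by simpa using hx)

lemma mn_eq {S : Finset ℕ} {a : ℕ} (ha : a ∈ S) (h : ∀ x ∈ S, a ≤ x) : mn S = a :=
  le_antisymm (mn_le ha) (le_csInf ⟨a, by simpa using ha⟩ (by simpa using h))

lemma mn_le_mx {S : Finset ℕ} (h : S.Nonempty) : mn S ≤ mx S := le_mx (mn_mem h)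

lemma mn_pos {S : Finset ℕ} (h0 : 0 ∉ S) (hne : S.Nonempty) : 1 ≤ mn S := by
  have := mn_mem hne
  rcases Nat.eq_zero_or_pos (mn S) with h | h
  · exact absurd (h ▸ this) h0
  · exact h

lemma sl_not_mem {S : Finset ℕ} (h0 : 0 ∉ S) : mx S - sl S ∉ S := by
  have : mx S ∈ {j | mx S - j ∉ S} := by simpa using h0
  exact Nat.sInf_mem ⟨mx S, this⟩

lemma sl_mem_of_lt {S : Finset ℕ} {j : ℕ} (hj : j < sl S) : mx S - j ∈ S := by
  by_contra h
  exact absurd (Nat.sInf_le h) (not_le.2 hj)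

lemma sl_pos {S : Finset ℕ} (h0 : 0 ∉ S) (hne : S.Nonempty) : 1 ≤ sl S := by
  rcases Nat.eq_zero_or_pos (sl S) with h | h
  · have h2 := sl_not_mem h0
    rw [h, Nat.sub_zero] at h2
    exact absurd (mx_mem hne) h2
  · exact h

lemma sl_le_mx {S : Finset ℕ} (h0 : 0 ∉ S) : sl S ≤ mx S :=
  Nat.sInf_le (by simpa using h0)

lemma sl_eq {S : Finset ℕ} {k : ℕ} (h1 : ∀ j < k, mx S - j ∈ S) (h2 : mx S - k ∉ S) :
    sl S = k :=
  le_antisymm (Nat.sInf_le h2)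
    (le_csInf ⟨k, h2⟩ (fun j hj => not_lt.1 fun hlt => hj (h1 j hlt)))

lemma le_sl {S : Finset ℕ} {k : ℕ} (h0 : 0 ∉ S) (h : ∀ j < k, mx S - j ∈ S) : k ≤ sl S :=
  le_csInf ⟨mx S, by simpa using h0⟩ (fun j hj => not_lt.1 fun hlt => hj (h j hlt))

lemma topIcc_subset {S : Finset ℕ} : Finset.Icc (mx S - sl S + 1) (mx S) ⊆ S := by
  intro x hx
  rw [Finset.mem_Icc] at hx
  have h := sl_mem_of_lt (S := S) (j := mx S - x) (by omega)
  rwa [show mx S - (mx S - x) = x by omega] at h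




/-- Franklin's move when smallest part ≤ slope: remove the smallest part `s`,
add 1 to each of the `s` largest parts. -/
noncomputable def up (S : Finset ℕ) : Finset ℕ :=
  ((S.erase (mn S)) \ Finset.Icc (mx S - mn S + 1) (mx S)) ∪
    Finset.Icc (mx S - mn S + 2) (mx S + 1)

/-- Franklin's move when smallest part > slope: subtract 1 from each of the
`t` parts of the slope, add a new smallest part `t`. -/
noncomputable def down (S : Finset ℕ) : Finset ℕ :=
  insert (sl S) ((S \ Finset.Icc (mx S - sl S + 1) (mx S)) ∪
    Finset.Icc (mx S - sl S) (mx S - 1))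

noncomputable def franklin (S : Finset ℕ) : Finset ℕ :=
  if mn S ≤ sl S then up S else down S

def Exc (S : Finset ℕ) : Prop :=
  (mn S ≤ sl S ∧ mx S < 2 * mn S) ∨ (sl S < mn S ∧ mx S ≤ 2 * sl S)

lemma sum_Icc_shift (a b : ℕ) (hb : 1 ≤ a) (hab : a ≤ b + 1) :
    ∑ i ∈ Finset.Icc a b, (i : ℕ) + (b + 1 - a) = ∑ i ∈ Finset.Icc (a + 1) (b + 1), i := by
  have h := Finset.image_add_right_Icc a b 1
  rw [← h, Finset.sum_image (fun x _ y _ h => by omega)]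
  rw [Finset.sum_add_distrib, Finset.sum_const, Nat.card_Icc, smul_eq_mul, mul_one]

lemma up_spec {S : Finset ℕ} (h0 : 0 ∉ S) (hne : S.Nonempty)
    (hst : mn S ≤ sl S) (hM : 2 * mn S ≤ mx S) :
    0 ∉ up S ∧ (up S).sum id = S.sum id ∧ S.card = (up S).card + 1 ∧
    sl (up S) < mn (up S) ∧ 2 * sl (up S) < mx (up S) ∧ franklin (up S) = S := by
  set M := mx S with hMdef
  set s := mn S with hsdef
  have hs1 : 1 ≤ s := mn_pos h0 hne
  have hsM : s ≤ M := mn_le_mx hne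
  have htop : Finset.Icc (M - s + 1) M ⊆ S := by
    refine subset_trans (Finset.Icc_subset_Icc (by omega) le_rfl) topIcc_subset
  have htop' : Finset.Icc (M - s + 1) M ⊆ S.erase s := by
    intro x hx
    rw [Finset.mem_Icc] at hx
    exact Finset.mem_erase.2 ⟨by omega, htop (Finset.mem_Icc.2 hx)⟩
  set A := (S.erase s) \ Finset.Icc (M - s + 1) M with hAdef
  have hup : up S = A ∪ Finset.Icc (M - s + 2) (M + 1) := rfl
  have hA : ∀ x ∈ A, x ∈ S ∧ s + 1 ≤ x ∧ x ≤ M - s := by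
    intro x hx
    rw [hAdef, Finset.mem_sdiff, Finset.mem_erase, Finset.mem_Icc] at hx
    obtain ⟨⟨hxs, hxS⟩, hxI⟩ := hx
    have h1 : mn S ≤ x := mn_le hxS
    have h2 : x ≤ mx S := le_mx hxS
    refine ⟨hxS, by omega, by omega⟩
  have hdisj : Disjoint A (Finset.Icc (M - s + 2) (M + 1)) := by
    rw [Finset.disjoint_left]
    intro x hx hx2
    rw [Finset.mem_Icc] at hx2
    have := (hA x hx).2.2
    omega
  have hcardIcc1 : (Finset.Icc (M - s + 1) M).card = s := by rw [Nat.card_Icc]; omega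
  have hcardIcc2 : (Finset.Icc (M - s + 2) (M + 1)).card = s := by rw [Nat.card_Icc]; omega
  have hcardA : A.card + s = S.card - 1 := by
    rw [hAdef, Finset.card_sdiff_of_subset htop', hcardIcc1, Finset.card_erase_of_mem (mn_mem hne)]
    have := Finset.card_le_card htop'
    rw [hcardIcc1] at this
    rw [Finset.card_erase_of_mem (mn_mem hne)] at this
    omega
  have hScard : 1 ≤ S.card := Finset.card_pos.2 hne
  have hcard : S.card = (up S).card + 1 := by
    rw [hup, Finset.card_union_of_disjoint hdisj, hcardIcc2]
    omega
  have hsum1 : A.sum id + (Finset.Icc (M - s + 1) M).sum id = (S.erase s).sum id :=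
    Finset.sum_sdiff htop'
  have hsum2 : (S.erase s).sum id + s = S.sum id := Finset.sum_erase_add S id (mn_mem hne)
  have hsum3 : (Finset.Icc (M - s + 1) M).sum id + s = (Finset.Icc (M - s + 2) (M + 1)).sum id := by
    have h := sum_Icc_shift (M - s + 1) M (by omega) (by omega)
    rw [show M - s + 1 + 1 = M - s + 2 by omega, show M + 1 - (M - s + 1) = s by omega] at h
    simp only [id]
    exact h
  have hsum : (up S).sum id = S.sum id := by
    rw [hup, Finset.sum_union hdisj]
    simp only [id] at hsum1 hsum2 hsum3 ⊢
    omega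
  have h0up : 0 ∉ up S := by
    rw [hup, Finset.mem_union, Finset.mem_Icc]
    rintro (h | h)
    · have := (hA 0 h).2.1; omega
    · omega
  have hMup : mx (up S) = M + 1 := by
    refine mx_eq ?_ ?_
    · rw [hup, Finset.mem_union, Finset.mem_Icc]; right; omega
    · intro x hx
      rw [hup, Finset.mem_union, Finset.mem_Icc] at hx
      rcases hx with h | h
      · have := (hA x h).2.2; omega
      · omega
  have hslup : sl (up S) = s := by
    refine sl_eq ?_ ?_
    · intro j hj
      rw [hMup, hup, Finset.mem_union, Finset.mem_Icc]
      right; omega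
    · rw [hMup, hup, Finset.mem_union, Finset.mem_Icc]
      rintro (h | h)
      · have := (hA _ h).2.2; omega
      · omega
  have hmnup : s + 1 ≤ mn (up S) := by
    have hall : ∀ x ∈ up S, s + 1 ≤ x := by
      intro x hx
      rw [hup, Finset.mem_union, Finset.mem_Icc] at hx
      rcases hx with h | h
      · exact (hA _ h).2.1
      · omega
    exact hall _ (mn_mem ⟨M + 1, by rw [hup, Finset.mem_union, Finset.mem_Icc]; right; omega⟩)
  refine ⟨h0up, hsum, hcard, by omega, by rw [hslup, hMup]; omega, ?_⟩
  -- franklin (up S) = S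
  have hbranch : ¬ (mn (up S) ≤ sl (up S)) := by omega
  rw [franklin, if_neg hbranch, down, hslup, hMup]
  rw [show M + 1 - s + 1 = M - s + 2 by omega, show M + 1 - s = M - s + 1 by omega,
    show M + 1 - 1 = M by omega]
  rw [hup, Finset.union_sdiff_right, Finset.sdiff_eq_self_iff_disjoint.2 hdisj]
  rw [hAdef, Finset.sdiff_union_of_subset htop', Finset.insert_erase (mn_mem hne)]

lemma down_spec {S : Finset ℕ} (h0 : 0 ∉ S) (hne : S.Nonempty)
    (hts : sl S < mn S) (hM : 2 * sl S < mx S) :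
    0 ∉ down S ∧ (down S).sum id = S.sum id ∧ (down S).card = S.card + 1 ∧
    mn (down S) ≤ sl (down S) ∧ 2 * mn (down S) ≤ mx (down S) ∧ franklin (down S) = S := by
  set M := mx S with hMdef
  set s := mn S with hsdef
  set t := sl S with htdef
  have hs1 : 1 ≤ s := mn_pos h0 hne
  have ht1 : 1 ≤ t := sl_pos h0 hne
  have htM : t ≤ M := sl_le_mx h0
  have htop : Finset.Icc (M - t + 1) M ⊆ S := topIcc_subset
  have hMt : M - t ∉ S := sl_not_mem h0
  set B := S \ Finset.Icc (M - t + 1) M with hBdef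
  have hdn : down S = insert t (B ∪ Finset.Icc (M - t) (M - 1)) := rfl
  have hB : ∀ x ∈ B, x ∈ S ∧ s ≤ x ∧ x < M - t := by
    intro x hx
    rw [hBdef, Finset.mem_sdiff, Finset.mem_Icc] at hx
    obtain ⟨hxS, hxI⟩ := hx
    have h1 : mn S ≤ x := mn_le hxS
    have h2 : x ≤ mx S := le_mx hxS
    have h3 : x ≠ M - t := fun h => hMt (h ▸ hxS)
    refine ⟨hxS, h1, by omega⟩
  have htnot : t ∉ B ∪ Finset.Icc (M - t) (M - 1) := by
    rw [Finset.mem_union, Finset.mem_Icc]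
    rintro (h | h)
    · have := (hB _ h).2.1; omega
    · omega
  have hdisj : Disjoint B (Finset.Icc (M - t) (M - 1)) := by
    rw [Finset.disjoint_left]
    intro x hx hx2
    rw [Finset.mem_Icc] at hx2
    have := (hB x hx).2.2
    omega
  have hcardIcc1 : (Finset.Icc (M - t + 1) M).card = t := by rw [Nat.card_Icc]; omega
  have hcardIcc2 : (Finset.Icc (M - t) (M - 1)).card = t := by rw [Nat.card_Icc]; omega
  have hcardtop : t ≤ S.card := by
    have := Finset.card_le_card htop
    omega
  have hcard : (down S).card = S.card + 1 := by
    rw [hdn, Finset.card_insert_of_notMem htnot, Finset.card_union_of_disjoint hdisj,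
      hBdef, Finset.card_sdiff_of_subset htop, hcardIcc1, hcardIcc2]
    omega
  have hsum1 : B.sum id + (Finset.Icc (M - t + 1) M).sum id = S.sum id :=
    Finset.sum_sdiff htop
  have hsum3 : (Finset.Icc (M - t) (M - 1)).sum id + t = (Finset.Icc (M - t + 1) M).sum id := by
    have h := sum_Icc_shift (M - t) (M - 1) (by omega) (by omega)
    rw [show M - t + 1 = M - t + 1 by omega, show M - 1 + 1 - (M - t) = t by omega,
      show M - 1 + 1 = M by omega] at h
    simp only [id]
    exact h
  have hsum : (down S).sum id = S.sum id := by
    rw [hdn, Finset.sum_insert htnot, Finset.sum_union hdisj]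
    simp only [id] at hsum1 hsum3 ⊢
    omega
  have h0dn : 0 ∉ down S := by
    rw [hdn, Finset.mem_insert, Finset.mem_union, Finset.mem_Icc]
    rintro (h | h | h)
    · omega
    · exact h0 ((hB _ h).1)
    · omega
  have hMdn : mx (down S) = M - 1 := by
    refine mx_eq ?_ ?_
    · rw [hdn, Finset.mem_insert, Finset.mem_union, Finset.mem_Icc]; right; right; omega
    · intro x hx
      rw [hdn, Finset.mem_insert, Finset.mem_union, Finset.mem_Icc] at hx
      rcases hx with h | h | h
      · omega
      · have := (hB _ h).2.2; omega
      · omega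
  have hmndn : mn (down S) = t := by
    refine mn_eq ?_ ?_
    · rw [hdn]; exact Finset.mem_insert_self _ _
    · intro x hx
      rw [hdn, Finset.mem_insert, Finset.mem_union, Finset.mem_Icc] at hx
      rcases hx with h | h | h
      · omega
      · have := (hB _ h).2.1; omega
      · omega
  have hsldn : t ≤ sl (down S) := by
    refine le_sl h0dn ?_
    intro j hj
    rw [hMdn, hdn, Finset.mem_insert, Finset.mem_union, Finset.mem_Icc]
    right; right; omega
  refine ⟨h0dn, hsum, hcard, by omega, by rw [hmndn, hMdn]; omega, ?_⟩
  -- franklin (down S) = S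
  have hbranch : mn (down S) ≤ sl (down S) := by omega
  rw [franklin, if_pos hbranch, up, hmndn, hMdn]
  rw [show M - 1 - t + 1 = M - t by omega, show M - 1 - t + 2 = M - t + 1 by omega,
    show M - 1 + 1 = M by omega]
  rw [hdn, Finset.erase_insert htnot, Finset.union_sdiff_right,
    Finset.sdiff_eq_self_iff_disjoint.2 hdisj]
  rw [hBdef, Finset.sdiff_union_of_subset htop]

lemma franklin_spec {S : Finset ℕ} (h0 : 0 ∉ S) (hne : S.Nonempty) (hexc : ¬ Exc S) :
    0 ∉ franklin S ∧ (franklin S).sum id = S.sum id ∧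
    (S.card = (franklin S).card + 1 ∨ (franklin S).card = S.card + 1) ∧
    ¬ Exc (franklin S) ∧ franklin (franklin S) = S := by
  rw [Exc, not_or] at hexc
  obtain ⟨h1, h2⟩ := hexc
  by_cases hst : mn S ≤ sl S
  · have hM : 2 * mn S ≤ mx S := by
      by_contra h
      exact h1 ⟨hst, by omega⟩
    obtain ⟨a, b, c, d, e, f⟩ := up_spec h0 hne hst hM
    rw [franklin, if_pos hst]
    refine ⟨a, b, Or.inl c, ?_, f⟩
    rw [Exc, not_or]
    exact ⟨fun h => by omega, fun h => by omega⟩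
  · push_neg at hst
    have hM : 2 * sl S < mx S := by
      by_contra h
      exact h2 ⟨hst, by omega⟩
    obtain ⟨a, b, c, d, e, f⟩ := down_spec h0 hne hst hM
    rw [franklin, if_neg (by omega)]
    refine ⟨a, b, Or.inr c, ?_, f⟩
    rw [Exc, not_or]
    exact ⟨fun h => by omega, fun h => by omega⟩



lemma om_nonempty {N : ℕ} {S : Finset ℕ} (h : S ∈ Om N) (hN : 1 ≤ N) : S.Nonempty := by
  rw [Finset.nonempty_iff_ne_empty]
  rintro rfl
  have := (mem_Om.1 h).2
  simp at this
  omega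

lemma exc_struct {S : Finset ℕ} (h0 : 0 ∉ S) (hne : S.Nonempty) (hexc : Exc S) :
    (S = Finset.Icc (mn S) (2 * mn S - 1) ∧ mx S = 2 * mn S - 1) ∨
    (S = Finset.Icc (sl S + 1) (2 * sl S) ∧ mx S = 2 * sl S ∧ mn S = sl S + 1) := by
  set M := mx S with hMdef
  set s := mn S with hsdef
  set t := sl S with htdef
  have hs1 : 1 ≤ s := mn_pos h0 hne
  have ht1 : 1 ≤ t := sl_pos h0 hne
  have hsM : s ≤ M := mn_le_mx hne
  have htM : t ≤ M := sl_le_mx h0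
  have hSsub : S ⊆ Finset.Icc s M := fun x hx => Finset.mem_Icc.2 ⟨mn_le hx, le_mx hx⟩
  rcases hexc with ⟨hst, hM⟩ | ⟨hts, hM⟩
  · left
    have htop : Finset.Icc (M - s + 1) M ⊆ S :=
      subset_trans (Finset.Icc_subset_Icc (by omega) le_rfl) topIcc_subset
    have h1 : M - s + 1 ∈ S := htop (Finset.mem_Icc.2 (by omega))
    have h2 : s ≤ M - s + 1 := mn_le h1
    have hMeq : M = 2 * s - 1 := by omega
    have : S = Finset.Icc s M := by
      refine le_antisymm hSsub ?_
      rw [show Finset.Icc s M = Finset.Icc (M - s + 1) M by congr 1; omega]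
      exact htop
    rw [← hMeq]
    exact ⟨this, rfl⟩
  · right
    have htop : Finset.Icc (M - t + 1) M ⊆ S := topIcc_subset
    have h1 : M - t + 1 ∈ S := htop (Finset.mem_Icc.2 (by omega))
    have h2 : s ≤ M - t + 1 := mn_le h1
    have hts2 : t + 1 ≤ s := by omega
    have hMeq : M = 2 * t := by omega
    have hSeq : S = Finset.Icc (t + 1) (2 * t) := by
      refine le_antisymm ?_ ?_
      · refine subset_trans hSsub ?_
        exact Finset.Icc_subset_Icc (by omega) (by omega)
      · rw [show Finset.Icc (t + 1) (2 * t) = Finset.Icc (M - t + 1) M by congr 1 <;> omega]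
        exact htop
    refine ⟨hSeq, hMeq, ?_⟩
    refine mn_eq ?_ ?_
    · rw [hSeq, Finset.mem_Icc]; omega
    · intro x hx
      rw [hSeq, Finset.mem_Icc] at hx
      omega

lemma sum_Icc_pos (k : ℕ) (hk : 1 ≤ k) :
    (Finset.Icc k (2 * k - 1)).sum id * 2 = k * (3 * k - 1) := by
  have h := sum_Icc_mul_two k (2 * k - 1)
  rw [show k + (2 * k - 1) = 3 * k - 1 by omega, show 2 * k - 1 + 1 - k = k by omega] at h
  simp only [id]
  rw [h, Nat.mul_comm]

lemma sum_Icc_neg (k : ℕ) (hk : 1 ≤ k) :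
    (Finset.Icc (k + 1) (2 * k)).sum id * 2 = k * (3 * k + 1) := by
  have h := sum_Icc_mul_two (k + 1) (2 * k)
  rw [show k + 1 + 2 * k = 3 * k + 1 by omega, show 2 * k + 1 - (k + 1) = k by omega] at h
  simp only [id]
  rw [h, Nat.mul_comm]

lemma sum_erase_invol (N : ℕ) (hN : 1 ≤ N) (E : Finset ℕ) (hEexc : Exc E)
    (hE : ∀ S ∈ Om N, S ≠ E → ¬ Exc S) :
    ∑ S ∈ (Om N).erase E, (-1 : ℤ) ^ S.card = 0 := by
  have spec : ∀ a ∈ (Om N).erase E,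
      0 ∉ franklin a ∧ (franklin a).sum id = a.sum id ∧
      (a.card = (franklin a).card + 1 ∨ (franklin a).card = a.card + 1) ∧
      ¬ Exc (franklin a) ∧ franklin (franklin a) = a := by
    intro a ha
    have ha' : a ∈ Om N := Finset.mem_of_mem_erase ha
    exact franklin_spec (mem_Om.1 ha').1 (om_nonempty ha' hN)
      (hE a ha' (Finset.ne_of_mem_erase ha))
  refine Finset.sum_involution (fun a _ => franklin a) ?_ ?_ ?_ ?_
  · intro a ha
    rcases (spec a ha).2.2.1 with h | h
    · rw [h, pow_succ]; ring
    · rw [h, pow_succ]; ring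
  · intro a ha _
    intro hfa
    replace hfa : franklin a = a := hfa
    rcases (spec a ha).2.2.1 with h | h <;> rw [hfa] at h <;> omega
  · intro a ha
    have ha' : a ∈ Om N := Finset.mem_of_mem_erase ha
    obtain ⟨h0f, hsumf, _, hexcf, _⟩ := spec a ha
    refine Finset.mem_erase.2 ⟨?_, mem_Om.2 ⟨h0f, hsumf.trans (mem_Om.1 ha').2⟩⟩
    intro hfE
    replace hfE : franklin a = E := hfE
    exact hexcf (hfE ▸ hEexc)
  · intro a ha
    exact (spec a ha).2.2.2.2

lemma om_sum_invol_all (N : ℕ) (hN : 1 ≤ N) (hA : ∀ S ∈ Om N, ¬ Exc S) :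
    ∑ S ∈ Om N, (-1 : ℤ) ^ S.card = 0 := by
  have spec : ∀ a ∈ Om N,
      0 ∉ franklin a ∧ (franklin a).sum id = a.sum id ∧
      (a.card = (franklin a).card + 1 ∨ (franklin a).card = a.card + 1) ∧
      ¬ Exc (franklin a) ∧ franklin (franklin a) = a := by
    intro a ha
    exact franklin_spec (mem_Om.1 ha).1 (om_nonempty ha hN) (hA a ha)
  refine Finset.sum_involution (fun a _ => franklin a) ?_ ?_ ?_ ?_
  · intro a ha
    rcases (spec a ha).2.2.1 with h | h
    · rw [h, pow_succ]; ring
    · rw [h, pow_succ]; ring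
  · intro a ha _
    intro hfa
    replace hfa : franklin a = a := hfa
    rcases (spec a ha).2.2.1 with h | h <;> rw [hfa] at h <;> omega
  · intro a ha
    obtain ⟨h0f, hsumf, _, hexcf, _⟩ := spec a ha
    exact mem_Om.2 ⟨h0f, hsumf.trans (mem_Om.1 ha).2⟩
  · intro a ha
    exact (spec a ha).2.2.2.2

lemma exc_pent_of_mem {N : ℕ} {S : Finset ℕ} (hN : 1 ≤ N) (hS : S ∈ Om N) (hexc : Exc S) :
    (1 ≤ mn S ∧ S = Finset.Icc (mn S) (2 * mn S - 1) ∧ (mn S : ℤ) * (3 * mn S - 1) = 2 * N) ∨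
    (1 ≤ sl S ∧ S = Finset.Icc (sl S + 1) (2 * sl S) ∧ (-(sl S : ℤ)) * (3 * (-(sl S : ℤ)) - 1) = 2 * N) := by
  obtain ⟨h0, hsum⟩ := mem_Om.1 hS
  have hne := om_nonempty hS hN
  have hs1 := mn_pos h0 hne
  have ht1 := sl_pos h0 hne
  rcases exc_struct h0 hne hexc with ⟨hSeq, _⟩ | ⟨hSeq, _, _⟩
  · left
    refine ⟨hs1, hSeq, ?_⟩
    have h2 : mn S * (3 * mn S - 1) = 2 * N := by
      have h3 := sum_Icc_pos (mn S) hs1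
      rw [← hSeq, hsum] at h3
      omega
    have h4 := congrArg (Nat.cast : ℕ → ℤ) h2
    push_cast [Nat.cast_sub (show 1 ≤ 3 * mn S by omega)] at h4
    linarith [h4]
  · right
    refine ⟨ht1, hSeq, ?_⟩
    have h2 : sl S * (3 * sl S + 1) = 2 * N := by
      have h3 := sum_Icc_neg (sl S) ht1
      rw [← hSeq, hsum] at h3
      omega
    have h4 := congrArg (Nat.cast : ℕ → ℤ) h2
    push_cast at h4
    linear_combination h4

lemma key_nonpent (N : ℕ) (h : ∀ m : ℤ, m * (3 * m - 1) ≠ 2 * N) :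
    ∑ S ∈ Om N, (-1 : ℤ) ^ S.card = 0 := by
  have hN : 1 ≤ N := by
    rcases Nat.eq_zero_or_pos N with h1 | h1
    · exfalso; apply h 0; subst h1; ring
    · exact h1
  refine om_sum_invol_all N hN ?_
  intro S hS hexc
  rcases exc_pent_of_mem hN hS hexc with ⟨_, _, hp⟩ | ⟨_, _, hp⟩
  · exact h _ hp
  · exact h _ hp

lemma key_pent (N : ℕ) (m : ℤ) (hm : m ≠ 0) (hpent : m * (3 * m - 1) = 2 * N) :
    ∑ S ∈ Om N, (-1 : ℤ) ^ S.card = (-1) ^ m.natAbs := by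
  set k := m.natAbs with hkdef
  have hk : 1 ≤ k := Int.natAbs_pos.2 hm
  have hN : 1 ≤ N := by
    have h1 : (2 : ℤ) ≤ m * (3 * m - 1) := by
      rcases lt_or_gt_of_ne hm with h | h
      · nlinarith [h]
      · nlinarith [h]
    have h2 : (1 : ℤ) ≤ (N : ℤ) := by linarith [hpent, h1]
    exact_mod_cast h2
  rcases Int.natAbs_eq m with he | he <;> rw [← hkdef] at he <;> rw [he] at hpent
  · -- m = k : E = Icc k (2k-1)
    set E := Finset.Icc k (2 * k - 1) with hEdef
    have hkN : k * (3 * k - 1) = 2 * N := by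
      have h4 : ((k * (3 * k - 1) : ℕ) : ℤ) = ((2 * N : ℕ) : ℤ) := by
        push_cast [Nat.cast_sub (show 1 ≤ 3 * k by omega)]
        linear_combination hpent
      exact_mod_cast h4
    have hEne : E.Nonempty := ⟨k, Finset.mem_Icc.2 (by omega)⟩
    have hEmem : E ∈ Om N := by
      refine mem_Om.2 ⟨fun h1 => by rw [hEdef, Finset.mem_Icc] at h1; omega, ?_⟩
      rw [hEdef]
      have h3 := sum_Icc_pos k hk
      omega
    have hEcard : E.card = k := by rw [hEdef, Nat.card_Icc]; omega
    have hmnE : mn E = k := mn_eq (Finset.mem_Icc.2 (by omega))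
      (fun x hx => by rw [hEdef, Finset.mem_Icc] at hx; omega)
    have hmxE : mx E = 2 * k - 1 := mx_eq (Finset.mem_Icc.2 (by omega))
      (fun x hx => by rw [hEdef, Finset.mem_Icc] at hx; omega)
    have hslE : sl E = k := by
      refine sl_eq ?_ ?_
      · intro j hj
        rw [hmxE, hEdef, Finset.mem_Icc]
        omega
      · rw [hmxE, hEdef, Finset.mem_Icc]
        omega
    have hEexc : Exc E := Or.inl ⟨by omega, by omega⟩
    have hE : ∀ S ∈ Om N, S ≠ E → ¬ Exc S := by
      intro S hS hSne hexc
      rcases exc_pent_of_mem hN hS hexc with ⟨hs1, hSeq, hp⟩ | ⟨ht1, hSeq, hp⟩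
      · have h5 : (mn S : ℤ) = (k : ℤ) := pent_inj (hp.trans hpent.symm)
        have h7 : mn S = k := by omega
        exact hSne (by rw [hSeq, h7])
      · have h5 : (-(sl S : ℤ)) = (k : ℤ) := pent_inj (hp.trans hpent.symm)
        omega
    have h6 := Finset.sum_erase_add (Om N) (fun S => (-1 : ℤ) ^ S.card) hEmem
    rw [← h6, sum_erase_invol N hN E hEexc hE]
    simp [hEcard]
  · -- m = -k : E = Icc (k+1) (2k)
    set E := Finset.Icc (k + 1) (2 * k) with hEdef
    have hkN : k * (3 * k + 1) = 2 * N := by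
      have h4 : ((k * (3 * k + 1) : ℕ) : ℤ) = ((2 * N : ℕ) : ℤ) := by
        push_cast
        linear_combination hpent
      exact_mod_cast h4
    have hEne : E.Nonempty := ⟨k + 1, Finset.mem_Icc.2 (by omega)⟩
    have hEmem : E ∈ Om N := by
      refine mem_Om.2 ⟨fun h1 => by rw [hEdef, Finset.mem_Icc] at h1; omega, ?_⟩
      rw [hEdef]
      have h3 := sum_Icc_neg k hk
      omega
    have hEcard : E.card = k := by rw [hEdef, Nat.card_Icc]; omega
    have hmnE : mn E = k + 1 := mn_eq (Finset.mem_Icc.2 (by omega))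
      (fun x hx => by rw [hEdef, Finset.mem_Icc] at hx; omega)
    have hmxE : mx E = 2 * k := mx_eq (Finset.mem_Icc.2 (by omega))
      (fun x hx => by rw [hEdef, Finset.mem_Icc] at hx; omega)
    have hslE : sl E = k := by
      refine sl_eq ?_ ?_
      · intro j hj
        rw [hmxE, hEdef, Finset.mem_Icc]
        omega
      · rw [hmxE, hEdef, Finset.mem_Icc]
        omega
    have hEexc : Exc E := Or.inr ⟨by omega, by omega⟩
    have hE : ∀ S ∈ Om N, S ≠ E → ¬ Exc S := by
      intro S hS hSne hexc
      rcases exc_pent_of_mem hN hS hexc with ⟨hs1, hSeq, hp⟩ | ⟨ht1, hSeq, hp⟩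
      · have h5 : (mn S : ℤ) = -(k : ℤ) := pent_inj (hp.trans hpent.symm)
        omega
      · have h5 : (-(sl S : ℤ)) = -(k : ℤ) := pent_inj (hp.trans hpent.symm)
        have h7 : sl S = k := by omega
        exact hSne (by rw [hSeq, h7])
    have h6 := Finset.sum_erase_add (Om N) (fun S => (-1 : ℤ) ^ S.card) hEmem
    rw [← h6, sum_erase_invol N hN E hEexc hE]
    simp [hEcard]

open PowerSeries in
lemma coeff_lhs (N : ℕ) :
    (PowerSeries.coeff (R := ℤ) N) (∏ n ∈ Finset.range (N + 1), (1 - (X : PowerSeries ℤ) ^ (n + 1))) =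
    ∑ S ∈ Om N, (-1 : ℤ) ^ S.card := by
  have hrw : ∀ n ∈ Finset.range (N + 1),
      (1 - (X : PowerSeries ℤ) ^ (n + 1)) = -(X ^ (n + 1)) + 1 := fun n _ => by ring
  rw [Finset.prod_congr rfl hrw, Finset.prod_add]
  have hterm : ∀ t ∈ (Finset.range (N + 1)).powerset,
      (∏ i ∈ t, -((X : PowerSeries ℤ) ^ (i + 1))) *
        ∏ i ∈ (Finset.range (N + 1)) \ t, (1 : PowerSeries ℤ)
      = PowerSeries.C (R := ℤ) ((-1) ^ t.card) * X ^ (∑ i ∈ t, (i + 1)) := by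
    intro t _
    rw [Finset.prod_const_one, mul_one]
    have h1 : ∏ i ∈ t, -((X : PowerSeries ℤ) ^ (i + 1))
        = (-1 : PowerSeries ℤ) ^ t.card * ∏ i ∈ t, ((X : PowerSeries ℤ) ^ (i + 1)) := by
      rw [← Finset.prod_const, ← Finset.prod_mul_distrib]
      simp [neg_one_mul]
    rw [h1, Finset.prod_pow_eq_pow_sum]
    congr 1
    rw [show (-1 : PowerSeries ℤ) = PowerSeries.C (R := ℤ) (-1) by simp, ← map_pow]
  rw [Finset.sum_congr rfl hterm, map_sum]
  simp only [PowerSeries.coeff_C_mul, PowerSeries.coeff_X_pow]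
  rw [Finset.sum_congr rfl (fun t _ => by rw [mul_ite, mul_one, mul_zero] :
    ∀ t ∈ (Finset.range (N + 1)).powerset, (-1 : ℤ) ^ t.card *
      (if N = ∑ i ∈ t, (i + 1) then 1 else 0)
      = if N = ∑ i ∈ t, (i + 1) then (-1 : ℤ) ^ t.card else 0)]
  rw [← Finset.sum_filter]
  refine Finset.sum_nbij' (fun t => t.image (· + 1)) (fun S => S.image (· - 1))
    ?_ ?_ ?_ ?_ ?_
  · intro t ht
    rw [Finset.mem_filter] at ht
    refine mem_Om.2 ⟨?_, ?_⟩
    · intro h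
      obtain ⟨x, _, hx⟩ := Finset.mem_image.1 h
      omega
    · rw [Finset.sum_image (fun x _ y _ h => by omega)]
      simp only [id]
      omega
  · intro S hS
    obtain ⟨h0, hsum⟩ := mem_Om.1 hS
    rw [Finset.mem_filter]
    have hx1 : ∀ x ∈ S, 1 ≤ x := by
      intro x hx
      rcases Nat.eq_zero_or_pos x with h | h
      · exact absurd (h ▸ hx) h0
      · exact h
    have hinj : ∀ x ∈ S, ∀ y ∈ S, x - 1 = y - 1 → x = y := by
      intro x hx y hy h
      have := hx1 x hx
      have := hx1 y hy
      omega
    constructor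
    · rw [Finset.mem_powerset]
      intro z hz
      obtain ⟨x, hx, hxz⟩ := Finset.mem_image.1 hz
      have h2 : id x ≤ S.sum id := Finset.single_le_sum (f := id) (fun i _ => Nat.zero_le i) hx
      have h3 : x ≤ N := by rw [← hsum]; exact h2
      rw [Finset.mem_range]
      omega
    · rw [Finset.sum_image hinj]
      rw [← hsum]
      refine (Finset.sum_congr rfl ?_).symm
      intro x hx
      have := hx1 x hx
      simp only [id]
      omega
  · intro t ht
    show Finset.image (fun x => x - 1) (Finset.image (fun x => x + 1) t) = t
    rw [Finset.image_image]
    refine Eq.trans (Finset.image_congr ?_) t.image_id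
    intro x _
    simp
  · intro S hS
    obtain ⟨h0, _⟩ := mem_Om.1 hS
    show Finset.image (fun x => x + 1) (Finset.image (fun x => x - 1) S) = S
    rw [Finset.image_image]
    refine Eq.trans (Finset.image_congr ?_) S.image_id
    intro x hx
    simp only [Function.comp, id]
    have : x ≠ 0 := fun h => h0 (h ▸ hx)
    omega
  · intro t ht
    rw [Finset.card_image_of_injective _ (fun x y h => by omega)]

lemma om_zero : Om 0 = {∅} := by
  ext S
  rw [mem_Om, Finset.mem_singleton]
  constructor
  · rintro ⟨h0, hsum⟩
    rw [Finset.sum_eq_zero_iff] at hsum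
    rw [Finset.eq_empty_iff_forall_notMem]
    intro x hx
    exact h0 ((hsum x hx) ▸ hx)
  · rintro rfl
    simp

end PentagonalAux
end

/-- Euler's pentagonal number theorem:
`∏_{n ≥ 1} (1 - q^n) = ∑_{m ∈ ℤ} (-1)^m q^{m(3m-1)/2}` as formal power series. -/
theorem euler_pentagonal_number_theorem :
    seriesProd (fun n => 1 - X ^ (n + 1)) =
      seriesSum (fun m => (m.negOnePow : ℤ)) (fun m => (m * (3 * m - 1) / 2).toNat) := by
  ext N
  rw [seriesProd, seriesSum, PowerSeries.coeff_mk, PowerSeries.coeff_mk,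
    PentagonalAux.coeff_lhs N]
  by_cases h : ∃ m : ℤ, m * (3 * m - 1) = 2 * N
  · obtain ⟨m, hm⟩ := h
    rw [tsum_eq_single m ?_]
    · show ∑ S ∈ PentagonalAux.Om N, (-1 : ℤ) ^ S.card
        = if (m * (3 * m - 1) / 2).toNat = N then (m.negOnePow : ℤ) else 0
      rw [if_pos ((PentagonalAux.pent_toNat_iff m N).2 hm)]
      rcases eq_or_ne m 0 with rfl | hm0
      · have hN0 : N = 0 := by
          norm_num at hm
          omega
        subst hN0
        rw [PentagonalAux.om_zero]
        simp
      · rw [PentagonalAux.key_pent N m hm0 hm, PentagonalAux.negOnePow_natAbs]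
    · intro b hb
      show (if (b * (3 * b - 1) / 2).toNat = N then (b.negOnePow : ℤ) else 0) = 0
      rw [if_neg]
      intro hbN
      exact hb (PentagonalAux.pent_inj
        (((PentagonalAux.pent_toNat_iff b N).1 hbN).trans hm.symm))
  · push_neg at h
    rw [PentagonalAux.key_nonpent N h]
    have hz : ∀ b : ℤ,
        (if (b * (3 * b - 1) / 2).toNat = N then (b.negOnePow : ℤ) else 0) = 0 :=
      fun b => if_neg (fun hb => h b ((PentagonalAux.pent_toNat_iff b N).1 hb))
    rw [tsum_congr hz]
    exact tsum_zero.symm
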